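/- For z > 0 and n ≥ 1, the expected length of a random self-avoiding walk on K_n satisfies E_z^{(n)}(L) = (n-1) - 1/z + 1/(z χ_z^{(n)}). -/

import Mathlib

open Finset

/-- `c_N^{(n)} = (n-1)!/(n-1-N)!`, the number of `N`-step self-avoiding walks on `K_n`. -/
noncomputable def sawCount (n N : ℕ) : ℝ :=
  (Nat.factorial (n - 1) : ℝ) / (Nat.factorial (n - 1 - N) : ℝ)

/-- The susceptibility `χ_z^{(n)} = ∑_{N=0}^{n-1} c_N^{(n)} z^N`. -/
noncomputable def chi (n : ℕ) (z : ℝ) : ℝ :=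
  ∑ N ∈ Finset.range n, sawCount n N * z ^ N

/-- The expected length `E_z^{(n)}(L) = (∑_N N c_N^{(n)} z^N)/χ_z^{(n)}`. -/
noncomputable def meanL (n : ℕ) (z : ℝ) : ℝ :=
  (∑ N ∈ Finset.range n, (N : ℝ) * sawCount n N * z ^ N) / chi n z

lemma saw_succ (n N : ℕ) (h : N + 1 < n) :
    ((n - 1 - N : ℕ) : ℝ) * sawCount n N = sawCount n (N + 1) := by
  have h1 : n - 1 - N = (n - 1 - (N + 1)) + 1 := by omega
  unfold sawCount
  rw [h1, Nat.factorial_succ]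
  have h2 : ((n - 1 - (N + 1)).factorial : ℝ) ≠ 0 := by
    exact_mod_cast Nat.factorial_ne_zero _
  push_cast
  field_simp

lemma saw_zero (n : ℕ) : sawCount n 0 = 1 := by
  unfold sawCount
  rw [Nat.sub_zero, div_self (by exact_mod_cast Nat.factorial_ne_zero _)]

lemma saw_nonneg (n N : ℕ) : 0 ≤ sawCount n N := by
  unfold sawCount; positivity

lemma chi_pos (n : ℕ) (hn : 1 ≤ n) (z : ℝ) (hz : 0 < z) : 0 < chi n z := by
  unfold chi
  apply Finset.sum_pos'
  · intro i _
    have := saw_nonneg n i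
    positivity
  · refine ⟨0, Finset.mem_range.mpr hn, ?_⟩
    rw [saw_zero]
    norm_num

theorem meanL_eq (n : ℕ) (hn : 1 ≤ n) (z : ℝ) (hz : 0 < z) :
    meanL n z = ((n : ℝ) - 1) - 1 / z + 1 / (z * chi n z) := by
  obtain ⟨m, rfl⟩ : ∃ m, n = m + 1 := ⟨n - 1, by omega⟩
  set n := m + 1
  have hz' : z ≠ 0 := ne_of_gt hz
  have hchi : chi n z ≠ 0 := ne_of_gt (chi_pos n hn z hz)
  -- the shifted sum
  have hS : z * ∑ N ∈ Finset.range m, sawCount n (N + 1) * z ^ N = chi n z - 1 := by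
    have : chi n z = ∑ N ∈ Finset.range m, sawCount n (N + 1) * z ^ (N + 1)
        + sawCount n 0 * z ^ 0 := by
      unfold chi
      rw [Finset.sum_range_succ']
    rw [this, saw_zero, Finset.mul_sum]
    simp [pow_succ]
    ring_nf
  -- rewrite the numerator
  have hnum : ∑ N ∈ Finset.range n, (N : ℝ) * sawCount n N * z ^ N
      = ((n : ℝ) - 1) * chi n z - (chi n z - 1) / z := by
    have key : ∑ N ∈ Finset.range n, (((n : ℝ) - 1) - N) * sawCount n N * z ^ N
        = (chi n z - 1) / z := by
      rw [Finset.sum_range_succ]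
      have h0 : (((n : ℝ) - 1) - m) = 0 := by push_cast [n]; ring
      rw [h0]
      have : ∀ N ∈ Finset.range m, (((n : ℝ) - 1) - N) * sawCount n N * z ^ N
          = sawCount n (N + 1) * z ^ N := by
        intro N hN
        rw [Finset.mem_range] at hN
        have hcast : ((n : ℝ) - 1) - N = ((n - 1 - N : ℕ) : ℝ) := by
          have : (n - 1 - N : ℕ) = m - N := by omega
          rw [this]
          push_cast [Nat.cast_sub hN.le, n]
          ring
        rw [hcast, saw_succ n N (by omega)]
      rw [Finset.sum_congr rfl this]
      field_simp
      linarith [hS]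
    have expand : ∑ N ∈ Finset.range n, (N : ℝ) * sawCount n N * z ^ N
        = ((n : ℝ) - 1) * chi n z
          - ∑ N ∈ Finset.range n, (((n : ℝ) - 1) - N) * sawCount n N * z ^ N := by
      unfold chi
      rw [Finset.mul_sum, ← Finset.sum_sub_distrib]
      apply Finset.sum_congr rfl
      intro i _
      ring
    rw [expand, key]
  unfold meanL
  rw [hnum]
  field_simp
  ring
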